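/- (Linear programming bound for spherical codes.) Let n ≥ 2, let 0 < θ ≤ π, let h : ℝ → ℝ and c > 0. Assume: (i) for every M ≥ 1 and every finite sequence y_1, …, y_M of unit vectors in ℝ^n, Σ_{i=1}^M Σ_{j=1}^M h(⟨y_i, y_j⟩) ≥ M² c (i.e., h − c is a function of positive type on the sphere, which holds when h has an expansion in ultraspherical polynomials with nonnegative coefficients and constant term c); and (ii) h(t) ≤ 0 for all t ∈ [−1, cos θ]. Then every spherical code in S^{n−1} with minimal angle at least θ — i.e., every finite set C of unit vectors with ⟨x, y⟩ ≤ cos θ for all distinct x, y ∈ C — satisfies |C| ≤ h(1)/c. -/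

import Mathlib

/-- The linear programming bound for spherical codes: if `h - c` is of positive type on
the sphere, `c > 0`, and `h(t) ≤ 0` on `[-1, cos θ]`, then every spherical code with
minimal angle at least `θ` has at most `h(1)/c` points. -/
theorem lp_bound_spherical_codes (n : ℕ) (hn : 2 ≤ n) (θ : ℝ)
    (hθ : 0 < θ) (hθπ : θ ≤ Real.pi) (h : ℝ → ℝ) (c : ℝ) (hc : 0 < c)
    (hpos : ∀ M : ℕ, 1 ≤ M → ∀ y : Fin M → EuclideanSpace ℝ (Fin n),
      (∀ i, ‖y i‖ = 1) →
      (M : ℝ) ^ 2 * c ≤ ∑ i, ∑ j, h (inner ℝ (y i) (y j) : ℝ))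
    (hneg : ∀ t ∈ Set.Icc (-1 : ℝ) (Real.cos θ), h t ≤ 0)
    (C : Finset (EuclideanSpace ℝ (Fin n)))
    (hC : ∀ x ∈ C, ‖x‖ = 1)
    (hcode : ∀ x ∈ C, ∀ y ∈ C, x ≠ y → (inner ℝ x y : ℝ) ≤ Real.cos θ) :
    (C.card : ℝ) ≤ h 1 / c := by
  have hn1 : 0 < n := by omega
  -- h 1 ≥ c > 0, via the single unit vector e₀
  have hh1 : c ≤ h 1 := by
    have he : ‖(EuclideanSpace.single (⟨0, hn1⟩ : Fin n) (1:ℝ))‖ = 1 := by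
      simp [EuclideanSpace.norm_single]
    have := hpos 1 le_rfl (fun _ => EuclideanSpace.single (⟨0, hn1⟩ : Fin n) (1:ℝ))
      (fun _ => he)
    simpa [Fin.sum_univ_one, real_inner_self_eq_norm_sq, he] using this
  rcases Nat.eq_zero_or_pos C.card with h0 | hMpos
  · rw [h0]
    exact_mod_cast div_nonneg (hc.le.trans hh1) hc.le
  · set M := C.card with hM
    set y : Fin M → EuclideanSpace ℝ (Fin n) := fun i => (C.equivFin.symm i : EuclideanSpace ℝ (Fin n)) with hy
    have hymem : ∀ i, y i ∈ C := fun i => (C.equivFin.symm i).2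
    have hynorm : ∀ i, ‖y i‖ = 1 := fun i => hC _ (hymem i)
    have hyinj : Function.Injective y := fun i j hij => by
      have := Subtype.coe_injective hij
      exact C.equivFin.symm.injective this
    have hsum := hpos M hMpos y hynorm
    have hrow : ∀ i : Fin M, ∑ j, h (inner ℝ (y i) (y j) : ℝ) ≤ h 1 := by
      intro i
      have : ∑ j, h (inner ℝ (y i) (y j) : ℝ) ≤ ∑ j : Fin M, (if j = i then h 1 else 0) := by
        apply Finset.sum_le_sum
        intro j _
        by_cases hji : j = i
        · subst hji
          have h1 : (inner ℝ (y j) (y j) : ℝ) = 1 := by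
            rw [real_inner_self_eq_norm_sq, hynorm j]; norm_num
          rw [h1]; simp
        · simp only [hji, if_false]
          apply hneg
          constructor
          · have := abs_real_inner_le_norm (y i) (y j)
            rw [hynorm i, hynorm j] at this
            simpa using neg_le_of_abs_le this
          · exact hcode _ (hymem i) _ (hymem j) fun hyy => hji (hyinj hyy.symm) |>.elim
      simpa using this
    have htot : ∑ i, ∑ j, h (inner ℝ (y i) (y j) : ℝ) ≤ M * h 1 := by
      calc ∑ i, ∑ j, h (inner ℝ (y i) (y j) : ℝ) ≤ ∑ _i : Fin M, h 1 :=
            Finset.sum_le_sum fun i _ => hrow i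
        _ = M * h 1 := by simp [mul_comm]
    have hMc : (M : ℝ) * c ≤ h 1 := by
      have hMR : (0:ℝ) < M := by exact_mod_cast hMpos
      nlinarith [hsum.trans htot]
    rw [le_div_iff₀ hc]
    exact hMc
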